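/- In the Artin-Schreier tower over F_p, for every i ≥ 0 one has c_i^(N_0 N_1 ⋯ N_i) = 1 and a_i^(N_0 N_1 ⋯ N_i) = 1. -/

import Mathlib

open Finset

section Aux1

theorem AS_prod_range_mul {M : Type*} [CommMonoid M] (f : ℕ → M) (a b : ℕ) :
    ∏ r ∈ range (a * b), f r = ∏ k ∈ range a, ∏ t ∈ range b, f (k * b + t) := by
  induction a with
  | zero => simp
  | succ a ih => rw [Nat.succ_mul, Finset.prod_range_add, ih, Finset.prod_range_succ]

theorem AS_sum_range_mul {M : Type*} [AddCommMonoid M] (f : ℕ → M) (a b : ℕ) :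
    ∑ r ∈ range (a * b), f r = ∑ k ∈ range a, ∑ t ∈ range b, f (k * b + t) := by
  induction a with
  | zero => simp
  | succ a ih => rw [Nat.succ_mul, Finset.sum_range_add, ih, Finset.sum_range_succ]

theorem AS_pow_pow_cycle {M : Type*} [Monoid M] (x : M) {q : ℕ} (h : x ^ q = x) (k : ℕ) :
    x ^ q ^ k = x := by
  induction k with
  | zero => simpa using rfl
  | succ k ih => rw [pow_succ, pow_mul, ih, h]

theorem AS_exp_period {M : Type*} [Monoid M] {x : M} {p N : ℕ} (h : x ^ p ^ N = x) (t : ℕ) :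
    x ^ p ^ (t + N) = x ^ p ^ t := by
  rw [pow_add, mul_comm, pow_mul, h]

theorem AS_exp_period' {M : Type*} [Monoid M] {x : M} {p N : ℕ} (h : x ^ p ^ N = x) (k t : ℕ) :
    x ^ p ^ (k * N + t) = x ^ p ^ t := by
  induction k with
  | zero => simp
  | succ k ih =>
      have e : (k + 1) * N + t = (k * N + t) + N := by ring
      rw [e, AS_exp_period h, ih]

theorem AS_stable_up {M : Type*} [Monoid M] {x : M} {p a : ℕ} (h : x ^ p ^ p ^ a = x) {b : ℕ}
    (hab : a ≤ b) : x ^ p ^ p ^ b = x := by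
  have e : (p ^ p ^ a) ^ p ^ (b - a) = p ^ p ^ b := by
    rw [← pow_mul, ← pow_add, Nat.add_sub_cancel' hab]
  calc x ^ p ^ p ^ b = x ^ (p ^ p ^ a) ^ p ^ (b - a) := by rw [e]
    _ = x := AS_pow_pow_cycle x h _

theorem AS_prod_range_period {M : Type*} [CommMonoid M] (f : ℕ → M) {b : ℕ}
    (hf : ∀ t, f (t + b) = f t) (a : ℕ) :
    ∏ r ∈ range (a * b), f r = (∏ t ∈ range b, f t) ^ a := by
  have key : ∀ k t, f (k * b + t) = f t := by
    intro k
    induction k with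
    | zero => simp
    | succ k ih =>
        intro t
        have e : (k + 1) * b + t = k * b + t + b := by ring
        rw [e, hf, ih]
  rw [AS_prod_range_mul]
  calc ∏ k ∈ range a, ∏ t ∈ range b, f (k * b + t)
      = ∏ _k ∈ range a, ∏ t ∈ range b, f t :=
        Finset.prod_congr rfl fun k _ => Finset.prod_congr rfl fun t _ => key k t
    _ = (∏ t ∈ range b, f t) ^ a := by rw [Finset.prod_const, card_range]

theorem AS_sum_range_period {M : Type*} [AddCommMonoid M] (f : ℕ → M) {b : ℕ}
    (hf : ∀ t, f (t + b) = f t) (a : ℕ) :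
    ∑ r ∈ range (a * b), f r = a • (∑ t ∈ range b, f t) := by
  have key : ∀ k t, f (k * b + t) = f t := by
    intro k
    induction k with
    | zero => simp
    | succ k ih =>
        intro t
        have e : (k + 1) * b + t = k * b + t + b := by ring
        rw [e, hf, ih]
  rw [AS_sum_range_mul]
  calc ∑ k ∈ range a, ∑ t ∈ range b, f (k * b + t)
      = ∑ _k ∈ range a, ∑ t ∈ range b, f t :=
        Finset.sum_congr rfl fun k _ => Finset.sum_congr rfl fun t _ => key k t
    _ = a • (∑ t ∈ range b, f t) := by rw [Finset.sum_const, card_range]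

end Aux1

section Aux2

variable {K : Type*} [Field K] {p : ℕ} [Fact p.Prime] [CharP K p]

theorem AS_frob_iter (x a : K) (h : x ^ p = x + a) (m : ℕ) :
    x ^ p ^ m = x + ∑ r ∈ range m, a ^ p ^ r := by
  induction m with
  | zero => simp
  | succ m ih =>
      rw [pow_succ, pow_mul, ih, add_pow_char, h, sum_pow_char, Finset.sum_range_succ']
      have e : ∀ r, (a ^ p ^ r) ^ p = a ^ p ^ (r + 1) := by
        intro r; rw [← pow_mul, ← pow_succ]
      simp only [e, pow_zero, pow_one]
      ring

theorem AS_bridge_sum {M : Type*} [AddCommMonoid M] [NeZero p] (g : ZMod p → M) :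
    ∑ k ∈ range p, g (k : ZMod p) = ∑ z : ZMod p, g z := by
  refine Finset.sum_nbij' (fun k => (k : ZMod p)) (fun z => z.val) ?_ ?_ ?_ ?_ ?_ <;>
    intro a _
  · exact Finset.mem_univ _
  · exact Finset.mem_range.2 (ZMod.val_lt a)
  · exact ZMod.val_natCast_of_lt (Finset.mem_range.1 ‹_›)
  · exact ZMod.natCast_rightInverse a
  · rfl

theorem AS_bridge_prod {M : Type*} [CommMonoid M] [NeZero p] (g : ZMod p → M) :
    ∏ k ∈ range p, g (k : ZMod p) = ∏ z : ZMod p, g z := by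
  refine Finset.prod_nbij' (fun k => (k : ZMod p)) (fun z => z.val) ?_ ?_ ?_ ?_ ?_ <;>
    intro a _
  · exact Finset.mem_univ _
  · exact Finset.mem_range.2 (ZMod.val_lt a)
  · exact ZMod.val_natCast_of_lt (Finset.mem_range.1 ‹_›)
  · exact ZMod.natCast_rightInverse a
  · rfl

theorem AS_sum_zmod_pow (m : ℕ) (hm : 0 < m) (hm2 : m ≤ p - 1) :
    ∑ z : ZMod p, z ^ m = if m = p - 1 then (-1 : ZMod p) else 0 := by
  haveI : Fact (1 < p) := ⟨(Fact.out : p.Prime).one_lt⟩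
  have hp2 : 2 ≤ p := (Fact.out : p.Prime).two_le
  rcases eq_or_lt_of_le hm2 with h | h
  · subst h
    rw [if_pos rfl]
    have h1 : ∀ z : ZMod p, z ^ (p - 1) = if z = 0 then 0 else 1 := by
      intro z
      split_ifs with hz
      · subst hz; exact zero_pow (by omega)
      · exact ZMod.pow_card_sub_one_eq_one hz
    rw [Finset.sum_congr rfl fun z _ => h1 z]
    have h2 : ∀ z : ZMod p, (if z = 0 then (0:ZMod p) else 1) = 1 - (if z = 0 then 1 else 0) := by
      intro z; split_ifs <;> ring
    rw [Finset.sum_congr rfl fun z _ => h2 z, Finset.sum_sub_distrib, Finset.sum_const,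
      Finset.sum_ite_eq' Finset.univ (0 : ZMod p) (fun _ => (1:ZMod p)),
      if_pos (Finset.mem_univ _), Finset.card_univ, ZMod.card, nsmul_eq_mul,
      ZMod.natCast_self, zero_mul, zero_sub]
  · rw [if_neg (by omega)]
    have := FiniteField.sum_pow_lt_card_sub_one (ZMod p) m (by rw [ZMod.card]; omega)
    simpa using this

theorem AS_sum_shift_pow (x : K) : ∑ k ∈ range p, (x + (k : K)) ^ (p - 1) = -1 := by
  haveI : NeZero p := ⟨(Fact.out : p.Prime).ne_zero⟩
  have hp2 : 2 ≤ p := (Fact.out : p.Prime).two_le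
  let φ : ZMod p →+* K := ZMod.castHom dvd_rfl K
  have hcast : ∀ k : ℕ, (k : K) = φ (k : ZMod p) := fun k => (map_natCast φ k).symm
  calc ∑ k ∈ range p, (x + (k : K)) ^ (p - 1)
      = ∑ z : ZMod p, (x + φ z) ^ (p - 1) := by
        rw [← AS_bridge_sum (p := p) (fun z => (x + φ z) ^ (p-1))]
        exact Finset.sum_congr rfl fun k _ => by rw [hcast]
    _ = ∑ z : ZMod p, ∑ j ∈ range (p - 1 + 1), x ^ j * (φ z) ^ (p - 1 - j) *
          ((p-1).choose j : K) := by
        refine Finset.sum_congr rfl fun z _ => ?_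
        rw [add_pow]
    _ = ∑ j ∈ range (p - 1 + 1), (x ^ j * ((p-1).choose j : K)) *
          φ (∑ z : ZMod p, z ^ (p - 1 - j)) := by
        rw [Finset.sum_comm]
        refine Finset.sum_congr rfl fun j _ => ?_
        rw [map_sum, Finset.mul_sum]
        refine Finset.sum_congr rfl fun z _ => ?_
        rw [map_pow]; ring
    _ = -1 := by
        have hsplit : ∀ j ∈ range (p - 1 + 1), (x ^ j * ((p-1).choose j : K)) *
            φ (∑ z : ZMod p, z ^ (p - 1 - j)) = if j = 0 then -1 else 0 := by
          intro j hj
          rw [Finset.mem_range] at hj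
          split_ifs with hj0
          · subst hj0
            simp only [Nat.sub_zero]
            rw [AS_sum_zmod_pow (p - 1) (by omega) le_rfl, if_pos rfl]
            simp
          · rcases eq_or_lt_of_le (Nat.lt_succ_iff.mp hj) with h | h
            · subst h
              have e : p - 1 - (p-1) = 0 := by omega
              rw [e]
              simp only [pow_zero]
              rw [Finset.sum_const, Finset.card_univ, ZMod.card]
              simp [φ]
            · rw [AS_sum_zmod_pow (p - 1 - j) (by omega) (by omega), if_neg (by omega)]
              simp
        rw [Finset.sum_congr rfl hsplit, Finset.sum_ite_eq' (range (p-1+1)) 0 (fun _ => (-1:K))]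
        rw [if_pos (Finset.mem_range.2 (by omega))]

theorem AS_prod_shift (x : K) : ∏ k ∈ range p, (x + (k : K)) = x ^ p - x := by
  haveI : NeZero p := ⟨(Fact.out : p.Prime).ne_zero⟩
  have hp1 : 1 < p := (Fact.out : p.Prime).one_lt
  let φ : ZMod p →+* K := ZMod.castHom dvd_rfl K
  have hcast : ∀ k : ℕ, (k : K) = φ (k : ZMod p) := fun k => (map_natCast φ k).symm
  have hpoly : (Polynomial.X ^ p - Polynomial.X : Polynomial (ZMod p)) =
      ∏ z : ZMod p, (Polynomial.X - Polynomial.C z) := by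
    have hq : Fintype.card (ZMod p) = p := ZMod.card p
    have hroots := FiniteField.roots_X_pow_card_sub_X (ZMod p)
    rw [hq] at hroots
    have hmonic : (Polynomial.X ^ p - Polynomial.X : Polynomial (ZMod p)).Monic := by
      apply Polynomial.monic_X_pow_sub
      simpa using (Nat.one_lt_cast.mpr hp1 : (1 : WithBot ℕ) < p)
    have hdeg := FiniteField.X_pow_card_sub_X_natDegree_eq (ZMod p) hp1
    have hprod := Polynomial.prod_multiset_X_sub_C_of_monic_of_roots_card_eq hmonic
      (by rw [hroots, hdeg]; simpa using (ZMod.card p))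
    rw [hroots] at hprod
    rw [← hprod, Finset.prod_eq_multiset_prod]
  have neg_bij : ∏ z : ZMod p, (x + φ z) = ∏ z : ZMod p, (x - φ z) := by
    rw [← Equiv.prod_comp (Equiv.neg (ZMod p)) (fun z => (x - φ z))]
    refine Finset.prod_congr rfl fun z _ => ?_
    simp
  calc ∏ k ∈ range p, (x + (k : K))
      = ∏ z : ZMod p, (x + φ z) := by
        rw [← AS_bridge_prod (p := p) (fun z => x + φ z)]
        exact Finset.prod_congr rfl fun k _ => by rw [hcast]
    _ = ∏ z : ZMod p, (x - φ z) := neg_bij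
    _ = Polynomial.eval x (Polynomial.map φ (∏ z : ZMod p,
          (Polynomial.X - Polynomial.C z))) := by
        rw [Polynomial.map_prod, Polynomial.eval_prod]
        refine (Finset.prod_congr rfl fun z _ => ?_).symm
        simp
    _ = x ^ p - x := by rw [← hpoly]; simp

theorem AS_neg_one_pow_sub_one : ((-1 : K)) ^ (p - 1) = 1 := by
  have hp1 : 1 ≤ p := (Fact.out : p.Prime).one_lt.le
  have h : ((-1 : K)) ^ (p - 1) * (-1) = 1 * (-1) := by
    rw [← pow_succ, Nat.sub_add_cancel hp1, neg_one_pow_char K p, one_mul]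
  exact mul_right_cancel₀ (by simp : (-1 : K) ≠ 0) h

theorem AS_sum_shift_pow' {ε : K} (hε : ε = 1 ∨ ε = -1) (x : K) :
    ∑ k ∈ range p, (x + (k : K) * ε) ^ (p - 1) = -1 := by
  rcases hε with h | h
  · subst h; simpa using AS_sum_shift_pow x
  · subst h
    have key : ∀ k : ℕ, (x + (k : K) * (-1)) ^ (p - 1) = ((-x) + (k : K)) ^ (p - 1) := by
      intro k
      have e : x + (k : K) * (-1) = -((-x) + (k:K)) := by ring
      rw [e, neg_pow, AS_neg_one_pow_sub_one, one_mul]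
    rw [Finset.sum_congr rfl fun k _ => key k]
    exact AS_sum_shift_pow (-x)

theorem AS_prod_shift' {ε : K} (hε : ε = 1 ∨ ε = -1) (x : K) :
    ∏ k ∈ range p, (x + (k : K) * ε) = x ^ p - x := by
  rcases hε with h | h
  · subst h; simpa using AS_prod_shift x
  · subst h
    have key : ∀ k : ℕ, (x + (k : K) * (-1)) = (-1) * ((-x) + (k:K)) := by intro k; ring
    rw [Finset.prod_congr rfl fun k _ => key k, Finset.prod_mul_distrib, Finset.prod_const,
      Finset.card_range, AS_prod_shift (-x), neg_one_pow_char K p, neg_pow,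
      neg_one_pow_char K p]
    ring

theorem AS_natCast_pow (k : ℕ) : ((k : K)) ^ p = (k : K) := by
  have := map_natCast (frobenius K p) k
  rwa [frobenius_def] at this

theorem AS_scalar_fix (k n t : ℕ) : ((k : K) * (-1 : K) ^ n) ^ p ^ t = (k : K) * (-1 : K) ^ n := by
  refine AS_pow_pow_cycle _ ?_ t
  rw [mul_pow, AS_natCast_pow, pow_right_comm, neg_one_pow_char K p]

/-- the Frobenius shift on an Artin–Schreier generator, iterated `k * N` times -/
theorem AS_shift {x a T : K} (hx : x ^ p = x + a) {N : ℕ} (hafix : a ^ p ^ N = a)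
    (hT : ∑ r ∈ range N, a ^ p ^ r = T) (k : ℕ) :
    x ^ p ^ (k * N) = x + (k : K) * T := by
  have hper : ∀ t, a ^ p ^ (t + N) = a ^ p ^ t := AS_exp_period hafix
  have e : k * N = k * N + 0 := by ring
  calc x ^ p ^ (k * N) = x + ∑ r ∈ range (k * N), a ^ p ^ r := AS_frob_iter x a hx _
    _ = x + (k : K) * T := by
        rw [AS_sum_range_period (fun r => a ^ p ^ r) hper k, hT, nsmul_eq_mul]

end Aux2

section Main

variable {K : Type*} [Field K] {p : ℕ} [Fact p.Prime] [CharP K p]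

theorem AS_main (c : ℕ → K)
    (hc : ∀ i, c i ^ p - c i = (∏ j ∈ range i, c j) ^ (p - 1)) (i : ℕ) :
    (∏ m ∈ range (p ^ (i + 1)), c i ^ p ^ m) = 1 ∧
    c i ^ p ^ p ^ (i + 1) = c i ∧
    ∑ r ∈ range (p ^ i), ((∏ j ∈ range i, c j) ^ (p - 1)) ^ p ^ r = (-1 : K) ^ i := by
  induction i using Nat.strong_induction_on with
  | _ i IH =>
  have hp2 : 2 ≤ p := (Fact.out : p.Prime).two_le
  have hcp : ∀ n, c n ^ p = c n + (∏ j ∈ range n, c j) ^ (p - 1) := by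
    intro n
    have := hc n
    rw [sub_eq_iff_eq_add] at this
    rw [this]; ring
  -- A n is fixed by p^(p^n)-th power, for n ≤ i
  have hAfix : ∀ n, n ≤ i → ((∏ j ∈ range n, c j) ^ (p - 1)) ^ p ^ p ^ n
      = (∏ j ∈ range n, c j) ^ (p - 1) := by
    intro n hn
    have hb : (∏ j ∈ range n, c j) ^ p ^ p ^ n = ∏ j ∈ range n, c j := by
      rw [← Finset.prod_pow]
      refine Finset.prod_congr rfl fun j hj => ?_
      have hj' := Finset.mem_range.1 hj
      exact AS_stable_up (IH j (lt_of_lt_of_le hj' hn)).2.1 (by omega)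
    rw [pow_right_comm, hb]
  have hS : ∀ m, c i ^ p ^ m = c i + ∑ r ∈ range m,
      ((∏ j ∈ range i, c j) ^ (p - 1)) ^ p ^ r :=
    AS_frob_iter (c i) _ (hcp i)
  -- the trace value
  have hT : ∑ r ∈ range (p ^ i), ((∏ j ∈ range i, c j) ^ (p - 1)) ^ p ^ r = (-1 : K) ^ i := by
    cases i with
    | zero => simp
    | succ n =>
      have IHn := IH n (Nat.lt_succ_self n)
      have hTn := IHn.2.2
      have hAfn : ((∏ j ∈ range n, c j) ^ (p - 1)) ^ p ^ p ^ n
          = (∏ j ∈ range n, c j) ^ (p - 1) := hAfix n (Nat.le_succ n)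
      have hεcases : ((-1 : K) ^ n) = 1 ∨ ((-1 : K) ^ n) = -1 := by
        rcases Nat.even_or_odd n with h | h
        · left; exact h.neg_one_pow
        · right; exact h.neg_one_pow
      have hshift : ∀ k, c n ^ p ^ (k * p ^ n) = c n + (k : K) * (-1 : K) ^ n :=
        AS_shift (hcp n) hAfn hTn
      have hAsucc : (∏ j ∈ range (n+1), c j) ^ (p - 1)
          = (∏ j ∈ range n, c j) ^ (p - 1) * (c n) ^ (p - 1) := by
        rw [Finset.prod_range_succ, mul_pow]
      have hterm : ∀ k t, ((∏ j ∈ range (n+1), c j) ^ (p - 1)) ^ p ^ (k * p ^ n + t)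
          = ((∏ j ∈ range n, c j) ^ (p - 1)) ^ p ^ t *
            ((c n ^ p ^ t + (k : K) * (-1 : K) ^ n) ^ (p - 1)) := by
        intro k t
        rw [hAsucc, mul_pow]
        congr 1
        · exact AS_exp_period' hAfn k t
        · rw [pow_right_comm]
          congr 1
          rw [pow_add, pow_mul, hshift k, add_pow_char_pow, AS_scalar_fix]
      have hsucc : p ^ (n + 1) = p * p ^ n := by rw [pow_succ, mul_comm]
      calc ∑ r ∈ range (p ^ (n+1)), ((∏ j ∈ range (n+1), c j) ^ (p - 1)) ^ p ^ r
          = ∑ k ∈ range p, ∑ t ∈ range (p ^ n),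
              ((∏ j ∈ range (n+1), c j) ^ (p - 1)) ^ p ^ (k * p ^ n + t) := by
            rw [hsucc, AS_sum_range_mul]
        _ = ∑ t ∈ range (p ^ n), ((∏ j ∈ range n, c j) ^ (p - 1)) ^ p ^ t *
              ∑ k ∈ range p, (c n ^ p ^ t + (k : K) * (-1 : K) ^ n) ^ (p - 1) := by
            rw [Finset.sum_comm]
            refine Finset.sum_congr rfl fun t _ => ?_
            rw [Finset.mul_sum]
            exact Finset.sum_congr rfl fun k _ => hterm k t
        _ = ∑ t ∈ range (p ^ n), ((∏ j ∈ range n, c j) ^ (p - 1)) ^ p ^ t * (-1) := by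
            refine Finset.sum_congr rfl fun t _ => ?_
            rw [AS_sum_shift_pow' hεcases]
        _ = (-1 : K) ^ (n + 1) := by
            rw [← Finset.sum_mul, hTn]
            ring
  have hεcases : ((-1 : K) ^ i) = 1 ∨ ((-1 : K) ^ i) = -1 := by
    rcases Nat.even_or_odd i with h | h
    · left; exact h.neg_one_pow
    · right; exact h.neg_one_pow
  have hshift : ∀ k, c i ^ p ^ (k * p ^ i) = c i + (k : K) * (-1 : K) ^ i :=
    AS_shift (hcp i) (hAfix i le_rfl) hT
  have hsucc : p ^ (i + 1) = p * p ^ i := by rw [pow_succ, mul_comm]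
  have hPer : c i ^ p ^ p ^ (i + 1) = c i := by
    rw [hsucc, hshift p, CharP.cast_eq_zero K p, zero_mul, add_zero]
  have hterm : ∀ k t, c i ^ p ^ (k * p ^ i + t)
      = c i ^ p ^ t + (k : K) * (-1 : K) ^ i := by
    intro k t
    rw [pow_add, pow_mul, hshift k, add_pow_char_pow, AS_scalar_fix]
  have hNorm : (∏ m ∈ range (p ^ (i + 1)), c i ^ p ^ m) = 1 := by
    calc ∏ m ∈ range (p ^ (i+1)), c i ^ p ^ m
        = ∏ k ∈ range p, ∏ t ∈ range (p ^ i), c i ^ p ^ (k * p ^ i + t) := by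
          rw [hsucc, AS_prod_range_mul]
      _ = ∏ t ∈ range (p ^ i), ∏ k ∈ range p, (c i ^ p ^ t + (k : K) * (-1 : K) ^ i) := by
          rw [Finset.prod_comm]
          exact Finset.prod_congr rfl fun t _ => Finset.prod_congr rfl fun k _ => hterm k t
      _ = ∏ t ∈ range (p ^ i), ((∏ j ∈ range i, c j) ^ (p - 1)) ^ p ^ t := by
          refine Finset.prod_congr rfl fun t _ => ?_
          rw [AS_prod_shift' hεcases, ← pow_mul, ← pow_succ, hS (t+1), hS t,
            Finset.sum_range_succ]
          ring
      _ = ∏ t ∈ range (p ^ i), ∏ j ∈ range i, (c j ^ p ^ t) ^ (p - 1) := by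
          refine Finset.prod_congr rfl fun t _ => ?_
          rw [pow_right_comm, ← Finset.prod_pow, ← Finset.prod_pow]
      _ = ∏ j ∈ range i, (∏ t ∈ range (p ^ i), c j ^ p ^ t) ^ (p - 1) := by
          rw [Finset.prod_comm]
          exact Finset.prod_congr rfl fun j _ => Finset.prod_pow _ _ _
      _ = 1 := by
          refine Finset.prod_eq_one fun j hj => ?_
          have hj' := Finset.mem_range.1 hj
          have hper : ∀ t, c j ^ p ^ (t + p ^ (j+1)) = c j ^ p ^ t :=
            AS_exp_period (IH j hj').2.1
          have hdecomp : p ^ i = p ^ (i - (j+1)) * p ^ (j+1) := by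
            rw [← pow_add]; congr 1; omega
          rw [hdecomp, AS_prod_range_period _ hper, (IH j hj').1, one_pow, one_pow]
  exact ⟨hNorm, hPer, hT⟩

theorem AS_exp_eq (p : ℕ) (i : ℕ) :
    ∏ k ∈ range (i + 1), ∑ j ∈ range p, (p ^ p ^ k) ^ j
      = ∑ m ∈ range (p ^ (i + 1)), p ^ m := by
  induction i with
  | zero =>
      rw [Finset.prod_range_one, pow_one]
      exact Finset.sum_congr rfl fun j _ => by rw [pow_zero, pow_one]
  | succ n ih =>
      rw [Finset.prod_range_succ, ih]
      have e : p ^ (n + 2) = p * p ^ (n + 1) := by rw [pow_succ, mul_comm]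
      rw [e, AS_sum_range_mul (fun m => p ^ m) p (p ^ (n + 1))]
      rw [mul_comm, Finset.sum_mul]
      refine Finset.sum_congr rfl fun k _ => ?_
      rw [Finset.mul_sum]
      refine Finset.sum_congr rfl fun t _ => ?_
      rw [← pow_mul, ← pow_add]
      congr 1
      ring

end Main

theorem c_pow_prod_N_eq_one (p : ℕ) [Fact p.Prime]
    (c : ℕ → AlgebraicClosure (ZMod p))
    (hc : ∀ i, c i ^ p - c i = (∏ j ∈ Finset.range i, c j) ^ (p - 1))
    (i : ℕ) :
    c i ^ (∏ k ∈ Finset.range (i + 1), ∑ j ∈ Finset.range p, (p ^ p ^ k) ^ j) = 1 ∧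
    ((∏ j ∈ Finset.range (i + 1), c j) ^ (p - 1)) ^
      (∏ k ∈ Finset.range (i + 1), ∑ j ∈ Finset.range p, (p ^ p ^ k) ^ j) = 1 := by
  rw [AS_exp_eq p i]
  have hone : ∀ j, j ≤ i → (∏ m ∈ range (p ^ (i + 1)), c j ^ p ^ m) = 1 := by
    intro j hj
    have hper : ∀ t, c j ^ p ^ (t + p ^ (j + 1)) = c j ^ p ^ t :=
      AS_exp_period (AS_main c hc j).2.1
    have hdecomp : p ^ (i + 1) = p ^ (i - j) * p ^ (j + 1) := by
      rw [← pow_add]; congr 1; omega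
    rw [hdecomp, AS_prod_range_period _ hper, (AS_main c hc j).1, one_pow]
  constructor
  · rw [← Finset.prod_pow_eq_pow_sum]
    exact hone i le_rfl
  · rw [pow_right_comm, ← Finset.prod_pow]
    have h1 : ∀ j ∈ range (i + 1), c j ^ (∑ m ∈ range (p ^ (i + 1)), p ^ m) = 1 := by
      intro j hj
      rw [← Finset.prod_pow_eq_pow_sum]
      exact hone j (Nat.lt_succ_iff.mp (Finset.mem_range.1 hj))
    rw [Finset.prod_congr rfl h1, Finset.prod_const_one, one_pow]
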